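/- In a finite tree G, for any nonempty S ⊆ X and any x ∈ X, the distance minimizer π(x,S) lies on the path P(x,s) for every s ∈ S. -/
import Mathlib


open SimpleGraph

/-- `z` lies on a path from `x` to `y` in `G` (in a tree, the unique path). -/
def pathSet {X : Type*} (G : SimpleGraph X) (x y z : X) : Prop :=
  ∃ p : G.Walk x y, p.IsPath ∧ z ∈ p.support

/-- The path hull `H(S)`: union of paths between pairs of nodes of `S`. -/
def hull {X : Type*} (G : SimpleGraph X) (S : Set X) (z : X) : Prop :=
  ∃ x ∈ S, ∃ y ∈ S, pathSet G x y z

/-- `m` is a distance minimizer of `x` on the path hull of `S`. -/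
def isMinimizer {X : Type*} (G : SimpleGraph X) (x : X) (S : Set X) (m : X) : Prop :=
  hull G S m ∧ ∀ y, hull G S y → G.dist x m ≤ G.dist x y

/-- `ℓ` is a leaf: it has exactly one neighbor. -/
def isLeaf {X : Type*} (G : SimpleGraph X) (ℓ : X) : Prop := ∃! x, G.Adj ℓ x

/-- `t` is the top-ranked alternative of the strict preference `P`. -/
def isTop {X : Type*} (P : X → X → Prop) (t : X) : Prop := ∀ y, y ≠ t → P t y

/-- `P` with peak `t` is single-peaked on the tree `G`. -/
def singlePeakedAt {X : Type*} (G : SimpleGraph X) (P : X → X → Prop) (t : X) : Prop :=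
  ∀ a b, a ≠ b → pathSet G t a b → P b a

section Aux

variable {X : Type*} {G : SimpleGraph X}

lemma getPath (hG : G.IsTree) (u v : X) : ∃ p : G.Walk u v, p.IsPath :=
  ((hG.existsUnique_path u v).exists)

lemma mem_of_pathSet (hG : G.IsTree) {u v z : X} (h : pathSet G u v z)
    (q : G.Walk u v) (hq : q.IsPath) : z ∈ q.support := by
  obtain ⟨p, hp, hz⟩ := h
  obtain ⟨r, -, hun⟩ := hG.existsUnique_path u v
  rw [hun q hq, ← hun p hp]; exact hz

lemma pathSet_left (hG : G.IsTree) (u v : X) : pathSet G u v u := by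
  obtain ⟨p, hp⟩ := getPath hG u v
  exact ⟨p, hp, p.start_mem_support⟩

lemma pathSet_right (hG : G.IsTree) (u v : X) : pathSet G u v v := by
  obtain ⟨p, hp⟩ := getPath hG u v
  exact ⟨p, hp, p.end_mem_support⟩

lemma pathSet_symm {u v z : X} (h : pathSet G u v z) : pathSet G v u z := by
  obtain ⟨p, hp, hz⟩ := h
  exact ⟨p.reverse, hp.reverse, by simpa [SimpleGraph.Walk.support_reverse] using hz⟩

/-- If `z` is on the path from `u` to `v`, and `w` is on the path from `z` to `v`,
then `w` is on the path from `u` to `v`. -/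
lemma pathSet_trans_right (hG : G.IsTree) {u v z w : X}
    (hz : pathSet G u v z) (hw : pathSet G z v w) : pathSet G u v w := by
  classical
  obtain ⟨p, hp, hzp⟩ := hz
  have hd : (p.dropUntil z hzp).IsPath := hp.dropUntil hzp
  have hw' : w ∈ (p.dropUntil z hzp).support := mem_of_pathSet hG hw _ hd
  exact ⟨p, hp, p.support_dropUntil_subset hzp hw'⟩

/-- If `z` is on the path from `u` to `v`, and `w` is on the path from `u` to `z`,
then `w` is on the path from `u` to `v`. -/
lemma pathSet_trans_left (hG : G.IsTree) {u v z w : X}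
    (hz : pathSet G u v z) (hw : pathSet G u z w) : pathSet G u v w := by
  classical
  obtain ⟨p, hp, hzp⟩ := hz
  have ht : (p.takeUntil z hzp).IsPath := hp.takeUntil hzp
  have hw' : w ∈ (p.takeUntil z hzp).support := mem_of_pathSet hG hw _ ht
  exact ⟨p, hp, p.support_takeUntil_subset hzp hw'⟩

/-- Splitting: any vertex on the path from `u` to `v` is on the path from `u` to `t`
or on the path from `t` to `v`. -/
lemma pathSet_split (hG : G.IsTree) {u v z : X} (h : pathSet G u v z) (t : X) :
    pathSet G u t z ∨ pathSet G t v z := by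
  classical
  obtain ⟨q, hq⟩ := getPath hG u t
  obtain ⟨r, hr⟩ := getPath hG t v
  have hz : z ∈ (q.append r).bypass.support :=
    mem_of_pathSet hG h _ ((q.append r).bypass_isPath)
  have hz' := (q.append r).support_bypass_subset hz
  rw [SimpleGraph.Walk.mem_support_append_iff] at hz'
  rcases hz' with h1 | h2
  · exact Or.inl ⟨q, hq, h1⟩
  · exact Or.inr ⟨r, hr, h2⟩

lemma path_length_eq_dist (hG : G.IsTree) {u v : X} (p : G.Walk u v) (hp : p.IsPath) :
    p.length = G.dist u v := by
  obtain ⟨q, hq, hql⟩ := (hG.isConnected.preconnected u v).exists_path_of_dist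
  obtain ⟨r, -, hun⟩ := hG.existsUnique_path u v
  rw [hun p hp, ← hun q hq, hql]

lemma dist_add_of_pathSet (hG : G.IsTree) {u v z : X} (h : pathSet G u v z) :
    G.dist u z + G.dist z v = G.dist u v := by
  classical
  obtain ⟨p, hp, hz⟩ := h
  have h1 : G.dist u z ≤ (p.takeUntil z hz).length := SimpleGraph.dist_le _
  have h2 : G.dist z v ≤ (p.dropUntil z hz).length := SimpleGraph.dist_le _
  have hlen : (p.takeUntil z hz).length + (p.dropUntil z hz).length = p.length := by
    rw [← SimpleGraph.Walk.length_append, p.take_spec hz]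
  have h3 : p.length = G.dist u v := path_length_eq_dist hG p hp
  have h4 : G.dist u v ≤ G.dist u z + G.dist z v := hG.isConnected.dist_triangle
  omega

/-- The median: there is a vertex on all three pairwise paths. -/
lemma median_exists (hG : G.IsTree) (x m s : X) :
    ∃ w, pathSet G x s w ∧ pathSet G m s w ∧ pathSet G x m w := by
  obtain ⟨p, hp⟩ := getPath hG x s
  induction p with
  | nil => exact ⟨_, pathSet_left hG _ _, pathSet_right hG m _, pathSet_left hG _ m⟩
  | @cons x y s h p ih =>
    by_cases hx : pathSet G m s x
    · exact ⟨x, pathSet_left hG x s, hx, pathSet_left hG x m⟩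
    · have hp' : p.IsPath := hp.of_cons
      obtain ⟨w, hws, hms, hym⟩ := ih hp'
      have hxsw : pathSet G x s w := by
        obtain ⟨q, hq, hwq⟩ := hws
        obtain ⟨r, -, hun⟩ := hG.existsUnique_path y s
        refine ⟨Walk.cons h p, hp, ?_⟩
        have : w ∈ p.support := by rw [hun p hp', ← hun q hq]; exact hwq
        simp [this]
      refine ⟨w, hxsw, hms, ?_⟩
      by_cases hxy : pathSet G y m x
      · -- the path from y to m passes through x
        classical
        obtain ⟨r, hr, hxr⟩ := hxy
        by_cases hwy : w = y
        · -- then x ∈ P(m,y) ⊆ P(m,s), contradiction with hx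
          exfalso
          apply hx
          have hymx : pathSet G m y x := pathSet_symm ⟨r, hr, hxr⟩
          exact pathSet_trans_left hG (hwy ▸ hms) hymx
        · -- the segment y..x of r is the single edge, so r = cons h.symm (path x → m)
          have hcons : (Walk.cons h.symm (Walk.nil : G.Walk x x)).IsPath := by
            simp [Walk.cons_isPath_iff, h.ne']
          have htake : r.takeUntil x hxr = Walk.cons h.symm Walk.nil := by
            obtain ⟨q0, -, hun⟩ := hG.existsUnique_path y x
            exact (hun _ (hr.takeUntil hxr)).trans (hun _ hcons).symm
          have hdrop : (r.dropUntil x hxr).IsPath := hr.dropUntil hxr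
          have hwmem : w ∈ r.support := mem_of_pathSet hG hym r hr
          have hsupp : r.support = y :: (r.dropUntil x hxr).support := by
            conv_lhs => rw [← r.take_spec hxr]
            rw [SimpleGraph.Walk.support_append, htake]
            rw [SimpleGraph.Walk.support_eq_cons (r.dropUntil x hxr)]
            simp
          rw [hsupp] at hwmem
          rcases List.mem_cons.mp hwmem with h1 | h2
          · exact absurd h1 hwy
          · exact ⟨r.dropUntil x hxr, hdrop, h2⟩
      · -- x not on path y → m : prepend the edge
        obtain ⟨r, hr, hwr⟩ := hym
        have hxr : x ∉ r.support := fun hc => hxy ⟨r, hr, hc⟩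
        exact ⟨Walk.cons h r, hr.cons hxr, by simp [hwr]⟩

end Aux

theorem minimizer_on_path_to_each {X : Type*} [Fintype X]
    (G : SimpleGraph X) (hG : G.IsTree)
    (S : Set X) (hS : S.Nonempty)
    (x m : X) (hm : isMinimizer G x S m) :
    ∀ s ∈ S, pathSet G x s m := by
  intro s hs
  obtain ⟨⟨a, ha, b, hb, hmab⟩, hmin⟩ := hm
  -- m lies on P(c, s) for some c ∈ S
  have hcs : ∃ c ∈ S, pathSet G c s m := by
    rcases pathSet_split hG hmab s with h | h
    · exact ⟨a, ha, h⟩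
    · exact ⟨b, hb, pathSet_symm h⟩
  obtain ⟨c, hc, hcsm⟩ := hcs
  obtain ⟨w, hxs, hms, hxm⟩ := median_exists hG x m s
  -- w is in the hull
  have hwhull : hull G S w := ⟨c, hc, s, hs, pathSet_trans_right hG hcsm hms⟩
  -- distance computation
  have hd : G.dist x w + G.dist w m = G.dist x m := dist_add_of_pathSet hG hxm
  have hle : G.dist x m ≤ G.dist x w := hmin w hwhull
  have hzero : G.dist w m = 0 := by omega
  have hwm : w = m := (hG.isConnected.dist_eq_zero_iff).mp hzero
  exact hwm ▸ hxs
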